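/- arXiv:1801.03807 — 2 statements merged into one kernel-verified Lean document; each statement's English description precedes it below -/
import Mathlib

section
/- The subspace A_z^0 ⊂ A_z is closed under each operator ∂_{α,β} for α,β ∈ {0,1,z}: ∂_{α,β}(A_z^0) ⊆ A_z^0. -/
open scoped BigOperators

/-- Letters: `0 ↦ e₀`, `1 ↦ e₁`, `2 ↦ e_z`. -/
abbrev Letter := Fin 3

/-- The free noncommutative ring `𝒜_z = ℤ⟨e₀, e₁, e_z⟩`. -/
abbrev Az := MonoidAlgebra ℤ (FreeMonoid Letter)

/-- The monomial (word) corresponding to a list of letters. -/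
noncomputable def wordOf (l : List Letter) : Az :=
  MonoidAlgebra.single (FreeMonoid.ofList l) 1

/-- The extended sequence `a₀ = 0, a₁, …, a_n, a_{n+1} = 1`. -/
def ext (a : List Letter) (j : ℕ) : Letter :=
  ((0 : Letter) :: a ++ [1]).getD j 1

/-- `∂_{α,β}` on a word. -/
noncomputable def Dword (α β : Letter) (a : List Letter) : Az :=
  ∑ i ∈ Finset.range a.length,
    (((if ({ext a (i + 1), ext a (i + 2)} : Finset Letter) = {α, β} then 1 else 0)
      - (if ({ext a i, ext a (i + 1)} : Finset Letter) = {α, β} then 1 else 0) : ℤ))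
      • wordOf (a.eraseIdx i)

/-- The linear operator `∂_{α,β} : 𝒜_z → 𝒜_z`. -/
noncomputable def del (α β : Letter) : Az →ₗ[ℤ] Az :=
  (Finsupp.lsum ℤ fun w => LinearMap.toSpanSingleton ℤ Az (Dword α β (FreeMonoid.toList w))) ∘ₗ (MonoidAlgebra.coeffLinearEquiv ℤ).toLinearMap

/-- The shuffle product of two words. -/
noncomputable def shuffleWord : List Letter → List Letter → Az
  | [], v => wordOf v
  | u, [] => wordOf u
  | a :: u, b :: v =>
      wordOf [a] * shuffleWord u (b :: v) + wordOf [b] * shuffleWord (a :: u) v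
termination_by u v => u.length + v.length

/-- The shuffle product as a bilinear map on `𝒜_z`. -/
noncomputable def sh : Az →ₗ[ℤ] Az →ₗ[ℤ] Az :=
  (Finsupp.lsum ℤ fun u => LinearMap.toSpanSingleton ℤ (Az →ₗ[ℤ] Az)
    ((Finsupp.lsum ℤ fun v =>
      LinearMap.toSpanSingleton ℤ Az (shuffleWord (FreeMonoid.toList u) (FreeMonoid.toList v))) ∘ₗ (MonoidAlgebra.coeffLinearEquiv ℤ).toLinearMap)) ∘ₗ (MonoidAlgebra.coeffLinearEquiv ℤ).toLinearMap

/-- The (generalized) stuffle product of two words (the left word should lie in `𝒜`). -/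
noncomputable def stWord : List Letter → List Letter → Az
  | [], v => wordOf v
  | u, [] => wordOf u
  | a :: u, b :: v =>
      if a = 0 then wordOf [0] * stWord u (b :: v)
      else if a = 1 then
        wordOf [b] * (stWord u (b :: v) + stWord (a :: u) v - wordOf [0] * stWord u v)
      else 0
termination_by u v => u.length + v.length

/-- The stuffle product as a bilinear map. -/
noncomputable def st : Az →ₗ[ℤ] Az →ₗ[ℤ] Az :=
  (Finsupp.lsum ℤ fun u => LinearMap.toSpanSingleton ℤ (Az →ₗ[ℤ] Az)
    ((Finsupp.lsum ℤ fun v =>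
      LinearMap.toSpanSingleton ℤ Az (stWord (FreeMonoid.toList u) (FreeMonoid.toList v))) ∘ₗ (MonoidAlgebra.coeffLinearEquiv ℤ).toLinearMap)) ∘ₗ (MonoidAlgebra.coeffLinearEquiv ℤ).toLinearMap

/-- `Const` kills every word containing the letter `e_z`. -/
noncomputable def Const : Az →ₗ[ℤ] Az :=
  (Finsupp.lsum ℤ fun w => LinearMap.toSpanSingleton ℤ Az
    (if (2 : Letter) ∈ FreeMonoid.toList w then 0 else wordOf (FreeMonoid.toList w))) ∘ₗ (MonoidAlgebra.coeffLinearEquiv ℤ).toLinearMap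

/-- `τ_z` on letters. -/
noncomputable def tauLetter (a : Letter) : Az :=
  if a = 0 then wordOf [2] - wordOf [1]
  else if a = 1 then wordOf [2] - wordOf [0]
  else wordOf [2]

/-- `τ_z` on a word (reversing the word). -/
noncomputable def tauWord : List Letter → Az
  | [] => 1
  | a :: u => tauWord u * tauLetter a

/-- The duality anti-automorphism `τ_z`. -/
noncomputable def tau : Az →ₗ[ℤ] Az :=
  (Finsupp.lsum ℤ fun w => LinearMap.toSpanSingleton ℤ Az (tauWord (FreeMonoid.toList w))) ∘ₗ (MonoidAlgebra.coeffLinearEquiv ℤ).toLinearMap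

/-- `𝒜_z^0`: span of the empty word and of words beginning with `e₁` or `e_z`
and ending in `e₀` or `e_z`. -/
noncomputable def Az0 : Submodule ℤ Az :=
  Submodule.span ℤ {x | ∃ l : List Letter,
    (l = [] ∨ (l.head? ≠ some 0 ∧ l.getLast? ≠ some 1)) ∧ x = wordOf l}

/-- `𝒜_z^1`: span of the empty word and of words beginning with `e₁` or `e_z`. -/
noncomputable def Az1 : Submodule ℤ Az :=
  Submodule.span ℤ {x | ∃ l : List Letter, l.head? ≠ some 0 ∧ x = wordOf l}

/-- `𝒜 = ℤ⟨e₀, e₁⟩` inside `𝒜_z`. -/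
noncomputable def Asub : Submodule ℤ Az :=
  Submodule.span ℤ {x | ∃ l : List Letter, (2 : Letter) ∉ l ∧ x = wordOf l}

/-- `𝒜^1 = ℤ ⊕ e₁𝒜`. -/
noncomputable def A1sub : Submodule ℤ Az :=
  Submodule.span ℤ {x | ∃ l : List Letter,
    ((2 : Letter) ∉ l ∧ l.head? ≠ some 0 ∧ l.head? ≠ some 2) ∧ x = wordOf l}

/-- `𝒜^0 = ℤ ⊕ e₁𝒜e₀`. -/
noncomputable def A0sub : Submodule ℤ Az :=
  Submodule.span ℤ {x | ∃ l : List Letter,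
    ((2 : Letter) ∉ l ∧ (l = [] ∨ (l.head? = some 1 ∧ l.getLast? = some 0))) ∧ x = wordOf l}

/-- `𝒜_z^{-2} = ℤ ⊕ e₁𝒜_z e₀ ⊕ e_z 𝒜_z e₀`. -/
noncomputable def Azm2 : Submodule ℤ Az :=
  Submodule.span ℤ {x | ∃ l : List Letter,
    (l = [] ∨ (l.head? ≠ some 0 ∧ l.getLast? = some 0)) ∧ x = wordOf l}

/-- `𝒜_z^0 ∩ ℤ⟨e₁, e_z⟩`. -/
noncomputable def Wsub : Submodule ℤ Az :=
  Submodule.span ℤ {x | ∃ l : List Letter,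
    ((0 : Letter) ∉ l ∧ (l = [] ∨ l.getLast? = some 2)) ∧ x = wordOf l}

/-- `ℤ⟨e_z⟩`: span of powers of `e_z`. -/
noncomputable def Zez : Submodule ℤ Az :=
  Submodule.span ℤ {x | ∃ k : ℕ, x = wordOf (List.replicate k 2)}

/-- `𝒜_z^{-1} = 𝒜_z^{-2}·ℤ⟨e_z⟩`. -/
noncomputable def Azm1 : Submodule ℤ Az :=
  Submodule.span ℤ {x | ∃ l : List Letter, ∃ k : ℕ,
    (l = [] ∨ (l.head? ≠ some 0 ∧ l.getLast? = some 0)) ∧ x = wordOf (l ++ List.replicate k 2)}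

/-- `ℤ⟨e₀, e_z⟩ ∩ 𝒜_z^0`. -/
noncomputable def Vsub : Submodule ℤ Az :=
  Submodule.span ℤ {x | ∃ l : List Letter,
    ((1 : Letter) ∉ l ∧ (l = [] ∨ l.head? = some 2)) ∧ x = wordOf l}

/-- All lists of length `r` with entries in `{e₀, e_z}`. -/
def tuples : ℕ → List (List Letter)
  | 0 => [[]]
  | n + 1 => (tuples n).flatMap fun t => [(0 : Letter) :: t, (2 : Letter) :: t]

/-- `∂_{1,b₁} ∘ ⋯ ∘ ∂_{1,b_r}` for `bs = [b₁, …, b_r]`. -/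
noncomputable def delChain : List Letter → Az →ₗ[ℤ] Az
  | [] => LinearMap.id
  | b :: bs => (del 1 b).comp (delChain bs)

/-- `∂_{z,α₁} ∘ ⋯ ∘ ∂_{z,α_r}` for `as = [α₁, …, α_r]`. -/
noncomputable def delZChain : List Letter → Az →ₗ[ℤ] Az
  | [] => LinearMap.id
  | a :: as => (del 2 a).comp (delZChain as)

/-- `φ_⧢` on a word. -/
noncomputable def phiShWord (l : List Letter) : Az :=
  ∑ r ∈ Finset.range (l.length + 1),
    ((tuples r).map fun b => sh (Const (delChain b (wordOf l))) (wordOf b)).sum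

/-- `φ_⧢ : 𝒜_z^0 → 𝒜_z^0` (defined on all of `𝒜_z`). -/
noncomputable def phiSh : Az →ₗ[ℤ] Az :=
  (Finsupp.lsum ℤ fun w => LinearMap.toSpanSingleton ℤ Az (phiShWord (FreeMonoid.toList w))) ∘ₗ (MonoidAlgebra.coeffLinearEquiv ℤ).toLinearMap

/-- `φ_*` on a word. -/
noncomputable def phiStWord (l : List Letter) : Az :=
  ∑ r ∈ Finset.range (l.length + 1),
    ((tuples r).map fun b => st (Const (delChain b (wordOf l))) (wordOf b)).sum

/-- `φ_* : 𝒜_z^0 → 𝒜_z^0` (defined on all of `𝒜_z`). -/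
noncomputable def phiSt : Az →ₗ[ℤ] Az :=
  (Finsupp.lsum ℤ fun w => LinearMap.toSpanSingleton ℤ Az (phiStWord (FreeMonoid.toList w))) ∘ₗ (MonoidAlgebra.coeffLinearEquiv ℤ).toLinearMap

/-- `φ_⊗` on a word. -/
noncomputable def phiTWord (l : List Letter) : TensorProduct ℤ Az Az :=
  ∑ r ∈ Finset.range (l.length + 1),
    ((tuples r).map fun b => (Const (delChain b (wordOf l))) ⊗ₜ[ℤ] (wordOf b)).sum

/-- `φ_⊗ : 𝒜_z^0 → 𝒜^0 ⊗ ℤ⟨e₀, e_z⟩` (defined on all of `𝒜_z`). -/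
noncomputable def phiT : Az →ₗ[ℤ] TensorProduct ℤ Az Az :=
  (Finsupp.lsum ℤ fun w => LinearMap.toSpanSingleton ℤ (TensorProduct ℤ Az Az)
    (phiTWord (FreeMonoid.toList w))) ∘ₗ (MonoidAlgebra.coeffLinearEquiv ℤ).toLinearMap

/-- The `i`-fold shuffle power of `e₁`. -/
noncomputable def e1pow : ℕ → Az
  | 0 => 1
  | n + 1 => sh (wordOf [1]) (e1pow n)

/-- Substitution `z → 1` on words. -/
noncomputable def subst1 : Az →ₗ[ℤ] Az :=
  (Finsupp.lsum ℤ fun w => LinearMap.toSpanSingleton ℤ Az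
    (wordOf ((FreeMonoid.toList w).map fun a => if a = 2 then 1 else a))) ∘ₗ (MonoidAlgebra.coeffLinearEquiv ℤ).toLinearMap

lemma ext_succ (a : List Letter) (j : ℕ) : ext a (j + 1) = a.getD j 1 := by
  induction a generalizing j with
  | nil => cases j <;> rfl
  | cons x t ih =>
      cases j with
      | zero => rfl
      | succ j =>
          have h : ext (x :: t) (j + 1 + 1) = ext t (j + 1) := rfl
          rw [h, ih, List.getD_cons_succ]

lemma getD_eraseIdx (l : List Letter) (i j : ℕ) (d : Letter) :
    (l.eraseIdx i).getD j d = if j < i then l.getD j d else l.getD (j + 1) d := by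
  simp only [List.getD_eq_getElem?_getD, List.getElem?_eraseIdx]
  split <;> rfl

lemma mem_Az0_of_getD (l : List Letter)
    (h : l = [] ∨ (l.getD 0 2 ≠ 0 ∧ l.getD (l.length - 1) 2 ≠ 1)) :
    wordOf l ∈ Az0 := by
  apply Submodule.subset_span
  refine ⟨l, ?_, rfl⟩
  rcases h with h | ⟨h0, h1⟩
  · exact Or.inl h
  · rcases l with _ | ⟨a, t⟩
    · exact Or.inl rfl
    · refine Or.inr ⟨?_, ?_⟩
      · simpa using h0
      · rw [List.getLast?_eq_getElem?]
        intro hc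
        apply h1
        rw [List.getD_eq_getElem?_getD, hc]
        rfl

lemma getD_of_mem_set (l : List Letter)
    (h : l = [] ∨ (l.head? ≠ some 0 ∧ l.getLast? ≠ some 1)) :
    l = [] ∨ (l.getD 0 2 ≠ 0 ∧ l.getD (l.length - 1) 2 ≠ 1) := by
  rcases h with h | ⟨h0, h1⟩
  · exact Or.inl h
  · rcases l with _ | ⟨a, t⟩
    · exact Or.inl rfl
    · refine Or.inr ⟨by simpa using h0, ?_⟩
      intro hc
      apply h1
      rw [List.getLast?_eq_getElem?]
      have hlen : (a :: t).length - 1 < (a :: t).length := by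
        simp [Nat.lt_succ_iff]
      rw [List.getD_eq_getElem _ _ hlen] at hc
      rw [List.getElem?_eq_getElem hlen, hc]

lemma Dword_mem (α β : Letter) (l : List Letter)
    (h : l = [] ∨ (l.getD 0 2 ≠ 0 ∧ l.getD (l.length - 1) 2 ≠ 1)) :
    Dword α β l ∈ Az0 := by
  apply Submodule.sum_mem
  intro i hi
  rw [Finset.mem_range] at hi
  rcases h with rfl | ⟨h0, h1⟩
  · simp at hi
  by_cases hB : ext l i = ext l (i + 2)
  · have hpair : ({ext l (i + 1), ext l (i + 2)} : Finset Letter)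
        = {ext l i, ext l (i + 1)} := by
      rw [hB]; exact Finset.pair_comm _ _
    rw [hpair, sub_self, zero_smul]
    exact Submodule.zero_mem _
  · apply Submodule.smul_mem
    apply mem_Az0_of_getD
    by_cases hone : l.length = 1
    · exact Or.inl (by
        have : (l.eraseIdx i).length = 0 := by
          rw [List.length_eraseIdx, if_pos hi]; omega
        exact List.length_eq_zero_iff.mp this)
    · have hn2 : 2 ≤ l.length := by omega
      have hlen : (l.eraseIdx i).length = l.length - 1 := by
        rw [List.length_eraseIdx, if_pos hi]
      refine Or.inr ⟨?_, ?_⟩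
      · -- head
        rw [getD_eraseIdx]
        split
        · exact h0
        · -- i = 0, head becomes l.getD 1
          intro hc
          apply hB
          have hi0 : i = 0 := by omega
          subst hi0
          have h2 : ext l 2 = l.getD 1 1 := ext_succ l 1
          have : l.getD 1 1 = l.getD 1 2 := by
            rw [List.getD_eq_getElem _ _ (by omega : 1 < l.length),
                List.getD_eq_getElem _ _ (by omega : 1 < l.length)]
          rw [h2, this, hc]
          rfl
      · -- last
        rw [hlen, getD_eraseIdx]
        split
        · -- i = l.length - 1, last becomes l.getD (l.length - 2)
          rename_i hlt
          intro hc
          apply hB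
          have hieq : i = l.length - 1 := by omega
          have he1 : ext l i = l.getD (l.length - 2) 1 := by
            have : i = (l.length - 2) + 1 := by omega
            rw [this, ext_succ]
          have he2 : ext l (i + 2) = l.getD (i + 1) 1 := ext_succ l (i + 1)
          have hd1 : l.getD (l.length - 2) 1 = l.getD (l.length - 2) 2 := by
            rw [List.getD_eq_getElem _ _ (by omega : l.length - 2 < l.length),
                List.getD_eq_getElem _ _ (by omega : l.length - 2 < l.length)]
          have hd2 : l.getD (i + 1) 1 = 1 := by
            rw [List.getD_eq_getElem?_getD, List.getElem?_eq_none (by omega : l.length ≤ i + 1)]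
            rfl
          have : l.length - 1 - 1 = l.length - 2 := by omega
          rw [this] at hc
          rw [he1, he2, hd1, hc, hd2]
        · -- last stays l.getLast
          have : l.length - 1 - 1 + 1 = l.length - 1 := by omega
          rw [this]
          exact h1

theorem stmt_2' (α β : Letter) (u : Az) (hu : u ∈ Az0) :
    del α β u ∈ Az0 := by
  induction hu using Submodule.span_induction with
  | mem x hx =>
      obtain ⟨l, hl, rfl⟩ := hx
      have hd : del α β (wordOf l) = Dword α β l := by
        rw [wordOf]
        show (Finsupp.lsum ℤ (fun w => LinearMap.toSpanSingleton ℤ Az (Dword α β (FreeMonoid.toList w)))) (Finsupp.single (FreeMonoid.ofList l) (1 : ℤ)) = _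
        rw [Finsupp.lsum_single, LinearMap.toSpanSingleton_apply, one_smul,
          FreeMonoid.toList_ofList]
      rw [hd]
      exact Dword_mem α β l (getD_of_mem_set l hl)
  | zero => simp only [map_zero]; exact Submodule.zero_mem _
  | add x y hx hy ihx ihy => rw [map_add]; exact Submodule.add_mem _ ihx ihy
  | smul a x hx ih => rw [map_smul]; exact Submodule.smul_mem _ a ih

/-- `𝒜_z^0` is stable under every operator `∂_{α,β}`. -/
theorem stmt_2 (α β : Letter) (u : Az) (hu : u ∈ Az0) :
    del α β u ∈ Az0 := stmt_2' α β u hu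
end

section
/- The linear map f : A_z^{−2} ⊗ (A_z^0 ∩ Z⟨e_1,e_z⟩) → A_z^0 given by f(u ⊗ v) = u ⧢ v is a bijection. -/
open scoped BigOperators

def BU (l : List Letter) : Prop := l = [] ∨ (l.head? ≠ some 0 ∧ l.getLast? = some 0)
def BV (l : List Letter) : Prop := (0 : Letter) ∉ l ∧ (l = [] ∨ l.getLast? = some 2)
def BW (l : List Letter) : Prop := l = [] ∨ (l.head? ≠ some 0 ∧ l.getLast? ≠ some 1)

def pnz : Letter → Bool := fun x => x ≠ (0 : Letter)

def tail0 (l : List Letter) : ℕ := (l.reverse.takeWhile pnz).length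

lemma mem_of_getLast?_eq {l : List Letter} {a : Letter} (h : l.getLast? = some a) : a ∈ l := by
  rw [← List.head?_reverse] at h
  simpa using List.mem_of_mem_head? h

lemma takeWhile_pnz_eq_self {l : List Letter} (h : (0 : Letter) ∉ l) :
    l.takeWhile pnz = l := by
  induction l with
  | nil => rfl
  | cons a t ih =>
    simp only [List.mem_cons, not_or] at h
    rw [List.takeWhile_cons_of_pos (by simp [pnz, Ne.symm h.1]), ih h.2]

lemma takeWhile_pnz_length_ne {l : List Letter} (h : (0 : Letter) ∈ l) :
    (l.takeWhile pnz).length ≠ l.length := by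
  intro he
  have hpre : l.takeWhile pnz = l := (List.takeWhile_prefix pnz).eq_of_length he
  have := List.mem_takeWhile_imp (p := pnz) (hpre ▸ h)
  simp [pnz] at this

lemma tail0_of_not_mem {l : List Letter} (h : (0 : Letter) ∉ l) : tail0 l = l.length := by
  unfold tail0
  rw [takeWhile_pnz_eq_self (by simpa using h), List.length_reverse]

lemma tail0_cons_of_mem {a : Letter} {l : List Letter} (h : (0 : Letter) ∈ l) :
    tail0 (a :: l) = tail0 l := by
  unfold tail0
  rw [List.reverse_cons, List.takeWhile_append,
    if_neg (takeWhile_pnz_length_ne (by simpa using h))]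

lemma tail0_of_getLast?_zero {l : List Letter} (h : l.getLast? = some 0) : tail0 l = 0 := by
  unfold tail0
  rw [← List.head?_reverse] at h
  cases hr : l.reverse with
  | nil => simp [hr]
  | cons a t =>
    rw [hr] at h
    simp only [List.head?_cons, Option.some.injEq] at h
    rw [List.takeWhile_cons_of_neg (by simp [pnz, h])]
    rfl

lemma tail0_append {l v : List Letter} (h : l.getLast? = some 0) (hv : (0 : Letter) ∉ v) :
    tail0 (l ++ v) = v.length := by
  unfold tail0
  rw [List.reverse_append, List.takeWhile_append,
    if_pos (by rw [takeWhile_pnz_eq_self (by simpa using hv)]),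
    List.length_append, List.length_reverse]
  have h0 : tail0 l = 0 := tail0_of_getLast?_zero h
  unfold tail0 at h0
  omega
def shuffles : List Letter → List Letter → List (List Letter)
  | [], v => [v]
  | u, [] => [u]
  | a :: u, b :: v => ((shuffles u (b :: v)).map (a :: ·)) ++ ((shuffles (a :: u) v).map (b :: ·))
termination_by u v => u.length + v.length

lemma shuffles_nil_left (v : List Letter) : shuffles [] v = [v] := by
  cases v <;> simp [shuffles]

lemma shuffles_nil_right (u : List Letter) : shuffles u [] = [u] := by
  cases u <;> simp [shuffles]

lemma shuffles_cons (a b : Letter) (u v : List Letter) :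
    shuffles (a :: u) (b :: v) =
      ((shuffles u (b :: v)).map (a :: ·)) ++ ((shuffles (a :: u) v).map (b :: ·)) := by
  rw [shuffles]

lemma mem_shuffles_length {u v w : List Letter} (h : w ∈ shuffles u v) :
    w.length = u.length + v.length := by
  induction u, v using shuffles.induct generalizing w with
  | case1 v => rw [shuffles_nil_left] at h; simp at h; simp [h]
  | case2 u => rw [shuffles_nil_right] at h; simp at h; simp [h]
  | case3 a u b v ih1 ih2 =>
    rw [shuffles_cons] at h
    rcases List.mem_append.1 h with h | h <;> obtain ⟨w', hw', rfl⟩ := List.mem_map.1 h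
    · have := ih1 hw'; simp at this ⊢; omega
    · have := ih2 hw'; simp at this ⊢; omega

lemma mem_shuffles_left {u v w : List Letter} (h : w ∈ shuffles u v) :
    ∀ x ∈ u, x ∈ w := by
  induction u, v using shuffles.induct generalizing w with
  | case1 v => simp
  | case2 u => rw [shuffles_nil_right] at h; simp at h; simp [h]
  | case3 a u b v ih1 ih2 =>
    rw [shuffles_cons] at h
    rcases List.mem_append.1 h with h | h <;> obtain ⟨w', hw', rfl⟩ := List.mem_map.1 h
    · intro x hx
      rcases List.mem_cons.1 hx with rfl | hx
      · exact List.mem_cons_self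
      · exact List.mem_cons_of_mem _ (ih1 hw' x hx)
    · intro x hx
      exact List.mem_cons_of_mem _ (ih2 hw' x hx)

lemma mem_shuffles_head? {u v w : List Letter} (h : w ∈ shuffles u v) :
    w.head? = u.head? ∨ w.head? = v.head? := by
  induction u, v using shuffles.induct generalizing w with
  | case1 v => rw [shuffles_nil_left] at h; simp at h; simp [h]
  | case2 u => rw [shuffles_nil_right] at h; simp at h; simp [h]
  | case3 a u b v ih1 ih2 =>
    rw [shuffles_cons] at h
    rcases List.mem_append.1 h with h | h <;> obtain ⟨w', hw', rfl⟩ := List.mem_map.1 h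
    · left; rfl
    · right; rfl

lemma mem_shuffles_ne_nil {u v w : List Letter} (h : w ∈ shuffles u v) (hne : u ≠ [] ∨ v ≠ []) :
    w ≠ [] := by
  have hl := mem_shuffles_length h
  intro hw; subst hw
  simp only [List.length_nil] at hl
  rcases hne with hne | hne
  · exact hne (List.length_eq_zero_iff.1 (by omega))
  · exact hne (List.length_eq_zero_iff.1 (by omega))

lemma mem_shuffles_getLast? {u v w : List Letter} (h : w ∈ shuffles u v) :
    w.getLast? = u.getLast? ∨ w.getLast? = v.getLast? := by
  induction u, v using shuffles.induct generalizing w with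
  | case1 v => rw [shuffles_nil_left] at h; simp at h; simp [h]
  | case2 u => rw [shuffles_nil_right] at h; simp at h; simp [h]
  | case3 a u b v ih1 ih2 =>
    rw [shuffles_cons] at h
    rcases List.mem_append.1 h with h | h <;> obtain ⟨w', hw', rfl⟩ := List.mem_map.1 h
    · have hw'ne : w' ≠ [] := mem_shuffles_ne_nil hw' (Or.inr (by simp))
      obtain ⟨c0, w'', rfl⟩ := List.exists_cons_of_ne_nil hw'ne
      rw [List.getLast?_cons_cons]
      rcases ih1 hw' with hl | hl
      · cases u with
        | nil => simp at hl
        | cons c u' => left; rw [List.getLast?_cons_cons]; exact hl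
      · right; exact hl
    · have hw'ne : w' ≠ [] := mem_shuffles_ne_nil hw' (Or.inl (by simp))
      obtain ⟨c0, w'', rfl⟩ := List.exists_cons_of_ne_nil hw'ne
      rw [List.getLast?_cons_cons]
      rcases ih2 hw' with hl | hl
      · left; exact hl
      · cases v with
        | nil => simp at hl
        | cons c v' => right; rw [List.getLast?_cons_cons]; exact hl
lemma mem_shuffles_tail0 {u v w : List Letter} (hu : u.getLast? = some 0)
    (hv : (0 : Letter) ∉ v) (h : w ∈ shuffles u v) :
    w = u ++ v ∨ tail0 w < v.length := by
  induction u, v using shuffles.induct generalizing w with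
  | case1 v => simp at hu
  | case2 u =>
    rw [shuffles_nil_right] at h
    simp at h; subst h
    left; simp
  | case3 a u b v ih1 ih2 =>
    rw [shuffles_cons] at h
    have hb : b ≠ 0 := fun hb => hv (by simp [hb])
    rcases List.mem_append.1 h with h | h <;> obtain ⟨w', hw', rfl⟩ := List.mem_map.1 h
    · cases u with
      | nil =>
        simp only [List.getLast?_singleton, Option.some.injEq] at hu
        rw [shuffles_nil_left] at hw'
        simp at hw'; subst hw'
        left; rfl
      | cons c u' =>
        have hu' : (c :: u').getLast? = some 0 := by
          rw [List.getLast?_cons_cons] at hu; exact hu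
        have h0w : (0 : Letter) ∈ w' :=
          mem_shuffles_left hw' 0 (mem_of_getLast?_eq hu')
        rcases ih1 hu' hv hw' with rfl | hlt
        · left; rfl
        · right
          rw [tail0_cons_of_mem h0w]
          exact hlt
    · have h0w : (0 : Letter) ∈ w' :=
        mem_shuffles_left hw' 0 (mem_of_getLast?_eq hu)
      have hv' : (0 : Letter) ∉ v := fun hx => hv (List.mem_cons_of_mem _ hx)
      right
      rw [tail0_cons_of_mem h0w]
      rcases ih2 hu hv' hw' with rfl | hlt
      · rw [tail0_append hu hv']
        simp
      · simp only [List.length_cons]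
        omega

lemma count_map_cons (c d : Letter) (t : List Letter) (L : List (List Letter)) :
    (L.map (c :: ·)).count (d :: t) = if c = d then L.count t else 0 := by
  induction L with
  | nil => simp
  | cons x L ih =>
    simp only [List.map_cons, List.count_cons, ih, beq_iff_eq, List.cons.injEq]
    by_cases hcd : c = d <;> by_cases hxt : x = t <;> simp [hcd, hxt]

lemma count_shuffles {u v : List Letter} (hu : u.getLast? = some 0)
    (hv : (0 : Letter) ∉ v) :
    (shuffles u v).count (u ++ v) = 1 := by
  induction u, v using shuffles.induct with
  | case1 v => simp at hu
  | case2 u => rw [shuffles_nil_right]; simp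
  | case3 a u b v ih1 ih2 =>
    have hb : b ≠ 0 := fun hb => hv (by simp [hb])
    have hv' : (0 : Letter) ∉ v := fun hx => hv (List.mem_cons_of_mem _ hx)
    rw [shuffles_cons, List.count_append]
    have h1 : (List.map (a :: ·) (shuffles u (b :: v))).count ((a :: u) ++ (b :: v)) = 1 := by
      have : (a :: u) ++ (b :: v) = a :: (u ++ b :: v) := rfl
      rw [this, count_map_cons, if_pos rfl]
      cases u with
      | nil =>
        simp only [List.getLast?_singleton, Option.some.injEq] at hu
        rw [shuffles_nil_left]
        simp
      | cons c u' =>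
        have hu' : (c :: u').getLast? = some 0 := by
          rw [List.getLast?_cons_cons] at hu; exact hu
        exact ih1 hu' hv
    have h2 : (List.map (b :: ·) (shuffles (a :: u) v)).count ((a :: u) ++ (b :: v)) = 0 := by
      have : (a :: u) ++ (b :: v) = a :: (u ++ b :: v) := rfl
      rw [this, count_map_cons]
      by_cases hba : b = a
      · rw [if_pos hba]
        apply List.count_eq_zero_of_not_mem
        intro hmem
        have hune : u ≠ [] := by
          rintro rfl
          simp only [List.getLast?_singleton, Option.some.injEq] at hu
          exact hb (hba.trans hu)
        obtain ⟨c, u', rfl⟩ := List.exists_cons_of_ne_nil hune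
        have hu' : (c :: u').getLast? = some 0 := by
          rw [List.getLast?_cons_cons] at hu; exact hu
        have ht1 : tail0 ((c :: u') ++ b :: v) = v.length + 1 := by
          rw [tail0_append hu' hv]; simp
        rcases mem_shuffles_tail0 hu hv' hmem with heq | hlt
        · have := congrArg tail0 heq
          rw [ht1, tail0_append hu hv'] at this
          omega
        · rw [ht1] at hlt; omega
      · rw [if_neg hba]
    rw [h1, h2]
lemma letter_eq_two : ∀ c : Letter, c ≠ 0 → c ≠ 1 → c = 2 := by decide

def splitV (l : List Letter) : List Letter := (l.reverse.takeWhile pnz).reverse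
def splitU (l : List Letter) : List Letter := (l.reverse.dropWhile pnz).reverse

lemma splitU_append_splitV (l : List Letter) : splitU l ++ splitV l = l := by
  unfold splitU splitV
  rw [← List.reverse_append, List.takeWhile_append_dropWhile, List.reverse_reverse]

lemma splitV_length (l : List Letter) : (splitV l).length = tail0 l := by
  simp [splitV, tail0]

lemma not_mem_splitV (l : List Letter) : (0 : Letter) ∉ splitV l := by
  intro h
  have := List.mem_takeWhile_imp (List.mem_reverse.1 h)
  simp [pnz] at this

lemma dropWhile_head_false {p : Letter → Bool} (l : List Letter) :
    ∀ {c t}, l.dropWhile p = c :: t → p c = false := by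
  induction l with
  | nil => intro c t h; simp at h
  | cons a l ih =>
    intro c t h
    by_cases hp : p a
    · rw [List.dropWhile_cons_of_pos hp] at h; exact ih h
    · rw [List.dropWhile_cons_of_neg hp] at h
      cases h
      simpa using hp

lemma splitU_getLast? {l : List Letter} (h : splitU l ≠ []) :
    (splitU l).getLast? = some 0 := by
  unfold splitU at h ⊢
  rw [List.getLast?_reverse]
  cases hd : l.reverse.dropWhile pnz with
  | nil => rw [hd] at h; simp at h
  | cons c t =>
    have := dropWhile_head_false _ hd
    simp only [pnz, ne_eq, decide_eq_false_iff_not, not_not] at this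
    rw [List.head?_cons, this]

lemma takeWhile_pnz_reverse_nil {u : List Letter} (h : u.getLast? = some 0) :
    u.reverse.takeWhile pnz = [] := by
  have := tail0_of_getLast?_zero h
  unfold tail0 at this
  exact List.length_eq_zero_iff.1 this

lemma splitV_append {u v : List Letter} (hu : u = [] ∨ u.getLast? = some 0)
    (hv : (0 : Letter) ∉ v) : splitV (u ++ v) = v := by
  unfold splitV
  rw [List.reverse_append, List.takeWhile_append,
    if_pos (by rw [takeWhile_pnz_eq_self (by simpa using hv)])]
  rcases hu with rfl | hu
  · simp [takeWhile_pnz_eq_self (by simpa using hv)]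
  · rw [takeWhile_pnz_reverse_nil hu]
    simp

lemma splitU_append {u v : List Letter} (hu : u = [] ∨ u.getLast? = some 0)
    (hv : (0 : Letter) ∉ v) : splitU (u ++ v) = u := by
  have h1 := splitU_append_splitV (u ++ v)
  rw [splitV_append hu hv] at h1
  exact (List.append_inj' h1 rfl).1

lemma BU_splitU {l : List Letter} (hl : BW l) : BU (splitU l) := by
  by_cases hsu : splitU l = []
  · exact Or.inl hsu
  right
  refine ⟨?_, splitU_getLast? hsu⟩
  obtain ⟨c, t, hct⟩ := List.exists_cons_of_ne_nil hsu
  have hl1 := splitU_append_splitV l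
  have hlne : l ≠ [] := by
    intro h; subst h; exact hsu rfl
  have hh : l.head? = (splitU l).head? := by
    have h2 := List.head?_append_of_ne_nil (splitU l) (l₂ := splitV l) hsu
    rw [hl1] at h2
    exact h2
  rcases hl with rfl | ⟨hh0, _⟩
  · exact absurd rfl hlne
  · rw [← hh]; exact hh0

lemma BV_splitV {l : List Letter} (hl : BW l) : BV (splitV l) := by
  refine ⟨not_mem_splitV l, ?_⟩
  by_cases hsv : splitV l = []
  · exact Or.inl hsv
  right
  unfold splitV at hsv ⊢
  rw [List.getLast?_reverse]
  cases ht : l.reverse.takeWhile pnz with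
  | nil => rw [ht] at hsv; simp at hsv
  | cons c t =>
    rw [List.head?_cons]
    have hc : pnz c = true := List.mem_takeWhile_imp (p := pnz) (l := l.reverse)
      (by rw [ht]; exact List.mem_cons_self)
    have hc0 : c ≠ 0 := by simpa [pnz] using hc
    have hlast : l.getLast? = some c := by
      rw [← List.head?_reverse]
      have : l.reverse.head? = (l.reverse.takeWhile pnz).head? := by
        cases hr : l.reverse with
        | nil => rw [hr] at ht; simp at ht
        | cons d r =>
          rw [hr] at ht
          by_cases hd : pnz d
          · rw [List.takeWhile_cons_of_pos hd]; rfl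
          · rw [List.takeWhile_cons_of_neg hd] at ht; simp at ht
      rw [this, ht, List.head?_cons]
    have hlne : l ≠ [] := by
      intro h; rw [h] at hlast; simp at hlast
    rcases hl with rfl | ⟨_, hl1⟩
    · exact absurd rfl hlne
    · have hc1 : c ≠ 1 := by
        intro h; rw [h] at hlast; exact hl1 hlast
      rw [letter_eq_two c hc0 hc1]

lemma BW_append {u v : List Letter} (hu : BU u) (hv : BV v) : BW (u ++ v) := by
  rcases hu with rfl | ⟨hu0, hul⟩
  · simp only [List.nil_append]
    rcases hv.2 with rfl | hvl
    · exact Or.inl rfl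
    right
    constructor
    · intro h
      have := List.mem_of_mem_head? h
      exact hv.1 this
    · rw [hvl]; simp
  · have hune : u ≠ [] := by
      intro h; rw [h] at hul; simp at hul
    right
    constructor
    · rw [List.head?_append_of_ne_nil _ hune]; exact hu0
    · rw [List.getLast?_append]
      rcases hv.2 with rfl | hvl
      · simp [hul]
      · rw [hvl]; simp
lemma shuffleWord_nil_left (v : List Letter) : shuffleWord [] v = wordOf v := by
  cases v <;> simp [shuffleWord]

lemma shuffleWord_nil_right (u : List Letter) : shuffleWord u [] = wordOf u := by
  cases u <;> simp [shuffleWord]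

lemma shuffleWord_cons (a b : Letter) (u v : List Letter) :
    shuffleWord (a :: u) (b :: v) =
      wordOf [a] * shuffleWord u (b :: v) + wordOf [b] * shuffleWord (a :: u) v := by
  rw [shuffleWord]

lemma wordOf_cons_mul (a : Letter) (w : List Letter) :
    wordOf [a] * wordOf w = wordOf (a :: w) := by
  unfold wordOf
  rw [MonoidAlgebra.single_mul_single, one_mul]
  rfl

lemma sum_map_cons (a : Letter) (L : List (List Letter)) :
    wordOf [a] * (L.map wordOf).sum = ((L.map (a :: ·)).map wordOf).sum := by
  induction L with
  | nil => simp
  | cons x L ih => simp only [List.map_cons, List.sum_cons, mul_add, ih, wordOf_cons_mul]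

lemma shuffleWord_eq_sum (u v : List Letter) :
    shuffleWord u v = ((shuffles u v).map wordOf).sum := by
  induction u, v using shuffles.induct with
  | case1 v => rw [shuffleWord_nil_left, shuffles_nil_left]; simp
  | case2 u => rw [shuffleWord_nil_right, shuffles_nil_right]; simp
  | case3 a u b v ih1 ih2 =>
    rw [shuffleWord_cons, shuffles_cons, List.map_append, List.sum_append, ih1, ih2]
    congr 1
    · exact sum_map_cons a _
    · exact sum_map_cons b _

lemma sh_apply (u v : List Letter) : sh (wordOf u) (wordOf v) = shuffleWord u v := by
  unfold sh wordOf
  simp only [LinearMap.comp_apply, LinearEquiv.coe_coe, MonoidAlgebra.coeffLinearEquiv_apply, MonoidAlgebra.coeff_single]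
  erw [Finsupp.lsum_single, LinearMap.toSpanSingleton_apply, one_smul]
  simp only [LinearMap.comp_apply, LinearEquiv.coe_coe, MonoidAlgebra.coeffLinearEquiv_apply, MonoidAlgebra.coeff_single]
  erw [Finsupp.lsum_single, LinearMap.toSpanSingleton_apply, one_smul]
  rfl

def ErrS (n : ℕ) : Set Az := {x | ∃ w : List Letter, BW w ∧ tail0 w < n ∧ x = wordOf w}

lemma count_eq_count (a : List Letter) (l : List (List Letter)) :
    @List.count (List Letter) List.instBEq a l = @List.count _ instBEqOfDecidableEq a l := by
  induction l with
  | nil => rfl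
  | cons x l ih =>
    rw [@List.count_cons _ List.instBEq, @List.count_cons _ instBEqOfDecidableEq, ih]
    congr 1
    by_cases h : x = a <;> simp [h]

lemma key_expand {u v : List Letter} (hu : BU u) (hv : BV v) :
    shuffleWord u v - wordOf (u ++ v) ∈ Submodule.span ℤ (ErrS v.length) := by
  rcases eq_or_ne u [] with rfl | hune
  · rw [shuffleWord_nil_left, List.nil_append, sub_self]
    exact Submodule.zero_mem _
  rcases eq_or_ne v [] with rfl | hvne
  · rw [shuffleWord_nil_right, List.append_nil, sub_self]
    exact Submodule.zero_mem _
  obtain ⟨hh, hu'⟩ := hu.resolve_left hune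
  have hv0 : (0 : Letter) ∉ v := hv.1
  have hv2 : v.getLast? = some 2 := hv.2.resolve_left hvne
  have hvh : v.head? ≠ some 0 := by
    intro h
    exact hv0 (List.mem_of_mem_head? h)
  have hcount := count_shuffles hu' hv0
  have hcount' : Multiset.count (u ++ v) (↑(shuffles u v) : Multiset (List Letter)) = 1 := by
    rw [Multiset.coe_count, ← count_eq_count]
    exact hcount
  have hmem : (u ++ v) ∈ (↑(shuffles u v) : Multiset (List Letter)) := by
    rw [← Multiset.count_pos, hcount']
    norm_num
  have hsum : shuffleWord u v = (Multiset.map wordOf (↑(shuffles u v) : Multiset (List Letter))).sum := by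
    rw [shuffleWord_eq_sum, Multiset.map_coe, Multiset.sum_coe]
  rw [hsum, ← Multiset.cons_erase hmem, Multiset.map_cons, Multiset.sum_cons,
    add_sub_cancel_left]
  apply multiset_sum_mem
  intro x hx
  obtain ⟨w, hw, rfl⟩ := Multiset.mem_map.1 hx
  have hwmem : w ∈ shuffles u v :=
    Multiset.mem_coe.1 (Multiset.mem_of_mem_erase hw)
  apply Submodule.subset_span
  refine ⟨w, ?_, ?_, rfl⟩
  · right
    constructor
    · rcases mem_shuffles_head? hwmem with h | h <;> rw [h]
      · exact hh
      · exact hvh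
    · rcases mem_shuffles_getLast? hwmem with h | h <;> rw [h]
      · rw [hu']; simp
      · rw [hv2]; simp
  · rcases mem_shuffles_tail0 hu' hv0 hwmem with rfl | hlt
    · exfalso
      have hz := Multiset.count_erase_self (u ++ v) (↑(shuffles u v) : Multiset (List Letter))
      rw [hcount'] at hz
      have hpos := Multiset.count_pos.2 hw
      omega
    · exact hlt

noncomputable def ev (m : List Letter) : Az →ₗ[ℤ] ℤ :=
  Finsupp.lapply (FreeMonoid.ofList m) ∘ₗ (MonoidAlgebra.coeffLinearEquiv ℤ).toLinearMap

lemma ev_wordOf (m l : List Letter) : ev m (wordOf l) = if l = m then 1 else 0 := by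
  unfold ev wordOf
  simp only [LinearMap.comp_apply, LinearEquiv.coe_coe, MonoidAlgebra.coeffLinearEquiv_apply, MonoidAlgebra.coeff_single]
  by_cases h : l = m
  · subst h
    rw [if_pos rfl]
    erw [Finsupp.lapply_apply, Finsupp.single_eq_same]
  · rw [if_neg h]
    rw [Finsupp.lapply_apply, Finsupp.single_eq_of_ne (fun hc => h (FreeMonoid.ofList.injective hc).symm)]

lemma err_le_supported (n : ℕ) :
    Submodule.span ℤ (ErrS n) ≤
      MonoidAlgebra.supported ℤ ℤ {m : FreeMonoid Letter | BW (FreeMonoid.toList m) ∧ tail0 (FreeMonoid.toList m) < n} := by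
  rw [Submodule.span_le]
  rintro x ⟨w, hw, hn, rfl⟩
  rw [SetLike.mem_coe, MonoidAlgebra.mem_supported, wordOf, MonoidAlgebra.coeff_single]
  refine subset_trans Finsupp.support_single_subset ?_
  intro m hm
  have hmw := Finset.mem_singleton.1 (Finset.mem_coe.1 hm)
  subst hmw
  exact ⟨hw, hn⟩

lemma err_eval {n : ℕ} {x : Az} (hx : x ∈ Submodule.span ℤ (ErrS n)) {m : List Letter}
    (hm : ¬ (BW m ∧ tail0 m < n)) : ev m x = 0 := by
  have h1 := err_le_supported n hx
  rw [MonoidAlgebra.mem_supported] at h1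
  have h2 : (m : FreeMonoid Letter) ∉ x.coeff.support := fun hc => hm (h1 hc)
  simp only [ev, LinearMap.comp_apply, LinearEquiv.coe_coe, MonoidAlgebra.coeffLinearEquiv_apply, Finsupp.lapply_apply]
  exact Finsupp.notMem_support_iff.1 h2
abbrev UU := {l : List Letter // BU l}
abbrev VV := {l : List Letter // BV l}
abbrev WW := {l : List Letter // BW l}

noncomputable def tU : UU → Az := fun u => wordOf u.1
noncomputable def tV : VV → Az := fun v => wordOf v.1
noncomputable def tW : WW → Az := fun w => wordOf w.1

lemma li_subtype {P : List Letter → Prop} :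
    LinearIndependent ℤ (fun l : {l : List Letter // P l} => wordOf l.1) := by
  have hb : LinearIndependent ℤ
      (fun m : FreeMonoid Letter => (MonoidAlgebra.single m 1 : Az)) := by
    exact (MonoidAlgebra.basis (FreeMonoid Letter) ℤ).linearIndependent
  have hinj : Function.Injective
      (fun l : {l : List Letter // P l} => FreeMonoid.ofList l.1) :=
    FreeMonoid.ofList.injective.comp Subtype.val_injective
  exact hb.comp _ hinj

lemma Azm2_eq : Azm2 = Submodule.span ℤ (Set.range tU) := by
  unfold Azm2
  congr 1
  ext x
  constructor
  · rintro ⟨l, h1, rfl⟩; exact ⟨⟨l, h1⟩, rfl⟩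
  · rintro ⟨⟨l, h1⟩, rfl⟩; exact ⟨l, h1, rfl⟩

lemma Wsub_eq : Wsub = Submodule.span ℤ (Set.range tV) := by
  unfold Wsub
  congr 1
  ext x
  constructor
  · rintro ⟨l, h1, rfl⟩; exact ⟨⟨l, h1⟩, rfl⟩
  · rintro ⟨⟨l, h1⟩, rfl⟩; exact ⟨l, h1, rfl⟩

lemma Az0_eq : Az0 = Submodule.span ℤ (Set.range tW) := by
  unfold Az0
  congr 1
  ext x
  constructor
  · rintro ⟨l, h1, rfl⟩; exact ⟨⟨l, h1⟩, rfl⟩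
  · rintro ⟨⟨l, h1⟩, rfl⟩; exact ⟨l, h1, rfl⟩

noncomputable def bU : Module.Basis UU ℤ Azm2 :=
  (Module.Basis.span (li_subtype (P := BU))).map (LinearEquiv.ofEq _ _ Azm2_eq.symm)

noncomputable def bV : Module.Basis VV ℤ Wsub :=
  (Module.Basis.span (li_subtype (P := BV))).map (LinearEquiv.ofEq _ _ Wsub_eq.symm)

lemma bU_coe (u : UU) : (bU u : Az) = wordOf u.1 := by
  unfold bU
  exact congrArg Subtype.val (Module.Basis.span_apply (li_subtype (P := BU)) _)

lemma bV_coe (v : VV) : (bV v : Az) = wordOf v.1 := by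
  unfold bV
  exact congrArg Subtype.val (Module.Basis.span_apply (li_subtype (P := BV)) _)

noncomputable def bT :
    @Module.Basis (UU × VV) ℤ (TensorProduct ℤ Azm2 Wsub) _ _ TensorProduct.instModule :=
  bU.tensorProduct bV

noncomputable def Fam : WW → Az := fun w => shuffleWord (splitU w.1) (splitV w.1)

noncomputable def G : UU × VV ≃ WW where
  toFun p := ⟨p.1.1 ++ p.2.1, BW_append p.1.2 p.2.2⟩
  invFun w := (⟨splitU w.1, BU_splitU w.2⟩, ⟨splitV w.1, BV_splitV w.2⟩)
  left_inv p := by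
    obtain ⟨⟨u, hu⟩, ⟨v, hv⟩⟩ := p
    have hu' : u = [] ∨ u.getLast? = some 0 := by
      rcases hu with h | h
      · exact Or.inl h
      · exact Or.inr h.2
    ext : 2 <;> simp only
    · exact splitU_append hu' hv.1
    · exact splitV_append hu' hv.1
  right_inv w := Subtype.ext (splitU_append_splitV w.1)

lemma F_basis (p : UU × VV) :
    TensorProduct.lift ((sh.comp Azm2.subtype).compl₂ Wsub.subtype) (bT p) =
      shuffleWord p.1.1 p.2.1 := by
  obtain ⟨u, v⟩ := p
  rw [bT, Module.Basis.tensorProduct_apply, TensorProduct.lift.tmul]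
  rw [LinearMap.compl₂_apply, LinearMap.comp_apply, Submodule.subtype_apply,
    Submodule.subtype_apply, bU_coe, bV_coe, sh_apply]

lemma Fam_G (p : UU × VV) : Fam (G p) = shuffleWord p.1.1 p.2.1 := by
  obtain ⟨⟨u, hu⟩, ⟨v, hv⟩⟩ := p
  have hu' : u = [] ∨ u.getLast? = some 0 := by
    rcases hu with h | h
    · exact Or.inl h
    · exact Or.inr h.2
  unfold Fam G
  simp only [Equiv.coe_fn_mk]
  rw [splitU_append hu' hv.1, splitV_append hu' hv.1]

lemma hFam_diff (w : WW) :
    Fam w - wordOf w.1 ∈ Submodule.span ℤ (ErrS (tail0 w.1)) := by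
  have h := key_expand (BU_splitU w.2) (BV_splitV w.2)
  rw [splitU_append_splitV, splitV_length] at h
  exact h

lemma ev_Fam_self (w : WW) : ev w.1 (Fam w) = 1 := by
  have h1 : ev w.1 (Fam w - wordOf w.1) = 0 :=
    err_eval (hFam_diff w) (by push_neg; intro _; omega)
  have h2 : ev w.1 (wordOf w.1) = 1 := by rw [ev_wordOf, if_pos rfl]
  have h3 := map_sub (ev w.1) (Fam w) (wordOf w.1)
  rw [h1, h2] at h3
  omega

lemma ev_Fam_ne (w w' : WW) (hne : w' ≠ w) (hle : tail0 w'.1 ≤ tail0 w.1) :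
    ev w.1 (Fam w') = 0 := by
  have h1 : ev w.1 (Fam w' - wordOf w'.1) = 0 :=
    err_eval (hFam_diff w') (by push_neg; intro _; omega)
  have h2 : ev w.1 (wordOf w'.1) = 0 := by
    rw [ev_wordOf, if_neg (fun hc => hne (Subtype.ext hc))]
  have h3 := map_sub (ev w.1) (Fam w') (wordOf w'.1)
  rw [h1, h2] at h3
  omega

lemma fam_li : LinearIndependent ℤ Fam := by
  rw [linearIndependent_iff]
  intro a ha
  have key : ∀ n : ℕ, ∀ w : WW,
      (a.support.sup fun w' => tail0 w'.1) < tail0 w.1 + n → a w = 0 := by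
    intro n
    induction n with
    | zero =>
      intro w hw
      by_contra h0
      have hle : tail0 w.1 ≤ a.support.sup fun w' => tail0 w'.1 :=
        Finset.le_sup (f := fun w' : WW => tail0 w'.1) (Finsupp.mem_support_iff.2 h0)
      omega
    | succ n ih =>
      intro w hw
      by_cases hsupp : w ∈ a.support
      swap
      · exact Finsupp.notMem_support_iff.1 hsupp
      have h0 : ev w.1 (Finsupp.linearCombination ℤ Fam a) = 0 := by rw [ha, map_zero]
      rw [Finsupp.linearCombination_apply, Finsupp.sum, map_sum] at h0
      have hterms : ∀ w' ∈ a.support, w' ≠ w → ev w.1 (a w' • Fam w') = 0 := by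
        intro w' _ hne
        rw [map_smul, smul_eq_mul]
        by_cases hgt : tail0 w.1 < tail0 w'.1
        · rw [ih w' (by omega), zero_mul]
        · rw [ev_Fam_ne w w' hne (by omega), mul_zero]
      rw [Finset.sum_eq_single_of_mem w hsupp hterms, map_smul, smul_eq_mul,
        ev_Fam_self, mul_one] at h0
      exact h0
  ext w
  exact key ((a.support.sup fun w' => tail0 w'.1) + 1) w (by omega)

lemma fam_span : Submodule.span ℤ (Set.range Fam) = Submodule.span ℤ (Set.range tW) := by
  apply le_antisymm
  · rw [Submodule.span_le]
    rintro x ⟨w, rfl⟩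
    have hW : Fam w = wordOf w.1 + (Fam w - wordOf w.1) := (add_sub_cancel _ _).symm
    rw [SetLike.mem_coe, hW]
    apply add_mem
    · exact Submodule.subset_span ⟨w, rfl⟩
    · have hle : Submodule.span ℤ (ErrS (tail0 w.1)) ≤ Submodule.span ℤ (Set.range tW) := by
        rw [Submodule.span_le]
        rintro y ⟨w', hw', _, rfl⟩
        exact Submodule.subset_span ⟨⟨w', hw'⟩, rfl⟩
      exact hle (hFam_diff w)
  · rw [Submodule.span_le]
    rintro x ⟨w, rfl⟩
    rw [SetLike.mem_coe]
    suffices h : ∀ n : ℕ, ∀ w : WW, tail0 w.1 < n →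
        wordOf w.1 ∈ Submodule.span ℤ (Set.range Fam) by
      exact h (tail0 w.1 + 1) w (by omega)
    intro n
    induction n with
    | zero => intro w hw; omega
    | succ n ih =>
      intro w hw
      have hW : wordOf w.1 = Fam w - (Fam w - wordOf w.1) := (sub_sub_cancel _ _).symm
      rw [hW]
      apply sub_mem (Submodule.subset_span (Set.mem_range_self w))
      have hle : Submodule.span ℤ (ErrS (tail0 w.1)) ≤ Submodule.span ℤ (Set.range Fam) := by
        rw [Submodule.span_le]
        rintro y ⟨w', hw', hlt, rfl⟩
        exact ih ⟨w', hw'⟩ (show tail0 w' < n by omega)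
      exact hle (hFam_diff w)
/-- The shuffle map `𝒜_z^{-2} ⊗ (𝒜_z^0 ∩ ℤ⟨e₁,e_z⟩) → 𝒜_z^0`, `u ⊗ v ↦ u ⧢ v`,
is a bijection onto `𝒜_z^0`. -/
theorem stmt_10 :
    Function.Injective
      (TensorProduct.lift ((sh.comp Azm2.subtype).compl₂ Wsub.subtype)) ∧
    LinearMap.range
      (TensorProduct.lift ((sh.comp Azm2.subtype).compl₂ Wsub.subtype)) = Az0 := by
  have hFc : TensorProduct.lift ((sh.comp Azm2.subtype).compl₂ Wsub.subtype) =
      bT.constr ℤ (Fam ∘ G) := by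
    apply bT.ext
    intro p
    rw [F_basis, Module.Basis.constr_basis, Function.comp_apply, Fam_G]
  have hli : LinearIndependent ℤ (Fam ∘ G) := fam_li.comp G G.injective
  constructor
  · intro x y hxy
    rw [hFc, Module.Basis.constr_apply, Module.Basis.constr_apply] at hxy
    have hxy' : Finsupp.linearCombination ℤ (Fam ∘ ⇑G) (bT.repr x) =
        Finsupp.linearCombination ℤ (Fam ∘ ⇑G) (bT.repr y) := by
      rw [Finsupp.linearCombination_apply, Finsupp.linearCombination_apply]
      exact hxy
    have hinj : Function.Injective (Finsupp.linearCombination ℤ (Fam ∘ ⇑G)) := by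
      rw [← LinearMap.ker_eq_bot]
      exact linearIndependent_iff_ker.1 hli
    exact bT.repr.injective (hinj hxy')
  · rw [hFc, Module.Basis.constr_range, G.surjective.range_comp, fam_span, ← Az0_eq]
end
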